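/- Assume δ is unramified, i.e. δ(u) = 0 for all u ∈ ℤ_pˣ. Let pr : Ind_P^G ε_δ → Ind_P^G χ be the map sending f to the function g ↦ f(g)₂. Then pr admits a K-equivariant k-linear section: there is a k-linear map s : Ind_P^G χ → Ind_P^G ε_δ with pr ∘ s = id and s(u·h) = u·s(h) for all u ∈ K and h ∈ Ind_P^G χ, where groups act by right translation (u·f)(g) = f(g·u). (The easy direction of Proposition 2.2 of the paper: the extension splits when restricted to K.) -/

import Mathlib

open Matrix

/-- membership in `K_n = {g ∈ GL₂(ℤ_p) : g ≡ 1 (mod pⁿ)}`. -/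
def InKn (p : ℕ) [Fact p.Prime] (n : ℕ) (u : GL (Fin 2) ℚ_[p]) : Prop :=
  ∀ i j, ‖(u : Matrix (Fin 2) (Fin 2) ℚ_[p]) i j
            - (1 : Matrix (Fin 2) (Fin 2) ℚ_[p]) i j‖ ≤ (p : ℝ) ^ (-(n : ℤ))

/-- membership in `K = GL₂(ℤ_p)`: entries in `ℤ_p` and determinant a unit. -/
def InK (p : ℕ) [Fact p.Prime] (u : GL (Fin 2) ℚ_[p]) : Prop :=
  (∀ i j, ‖(u : Matrix (Fin 2) (Fin 2) ℚ_[p]) i j‖ ≤ 1) ∧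
  ‖Matrix.det (u : Matrix (Fin 2) (Fin 2) ℚ_[p])‖ = 1

/-- membership in the principal series `Ind_P^G χ`. -/
def IsIndChi (p : ℕ) [Fact p.Prime] {k : Type*} [Field k]
    (χ₁ χ₂ : ℚ_[p]ˣ →* kˣ) (h : GL (Fin 2) ℚ_[p] → k) : Prop :=
  (∀ b g : GL (Fin 2) ℚ_[p],
    (b : Matrix (Fin 2) (Fin 2) ℚ_[p]) 1 0 = 0 →
    ∀ a d : ℚ_[p]ˣ,
      (b : Matrix (Fin 2) (Fin 2) ℚ_[p]) 0 0 = (a : ℚ_[p]) →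
      (b : Matrix (Fin 2) (Fin 2) ℚ_[p]) 1 1 = (d : ℚ_[p]) →
      h (b * g) = (χ₁ a : k) * (χ₂ d : k) * h g) ∧
  (∃ n : ℕ, 1 ≤ n ∧ ∀ g u, InKn p n u → h (g * u) = h g)

/-- membership in `Ind_P^G ε_δ`. -/
def IsIndEps (p : ℕ) [Fact p.Prime] {k : Type*} [Field k]
    (χ₁ χ₂ : ℚ_[p]ˣ →* kˣ) (δ : ℚ_[p]ˣ → k)
    (f : GL (Fin 2) ℚ_[p] → k × k) : Prop :=
  (∀ b g : GL (Fin 2) ℚ_[p],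
    (b : Matrix (Fin 2) (Fin 2) ℚ_[p]) 1 0 = 0 →
    ∀ a d : ℚ_[p]ˣ,
      (b : Matrix (Fin 2) (Fin 2) ℚ_[p]) 0 0 = (a : ℚ_[p]) →
      (b : Matrix (Fin 2) (Fin 2) ℚ_[p]) 1 1 = (d : ℚ_[p]) →
      f (b * g) = ((χ₁ a : k) * (χ₂ d : k) * ((f g).1 + δ (a * d⁻¹) * (f g).2),
                   (χ₁ a : k) * (χ₂ d : k) * (f g).2)) ∧
  (∃ n : ℕ, 1 ≤ n ∧ ∀ g u, InKn p n u → f (g * u) = f g)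

namespace Statement2Aux

variable (p : ℕ) [Fact p.Prime]

lemma det_ne_zero (g : GL (Fin 2) ℚ_[p]) :
    Matrix.det (g : Matrix (Fin 2) (Fin 2) ℚ_[p]) ≠ 0 :=
  ((Matrix.isUnit_iff_isUnit_det _).mp g.isUnit).ne_zero

/-- an entry of maximal norm in the bottom row. -/
noncomputable def rowMax (g : GL (Fin 2) ℚ_[p]) : ℚ_[p] :=
  if ‖(g : Matrix (Fin 2) (Fin 2) ℚ_[p]) 1 0‖ ≤ ‖(g : Matrix (Fin 2) (Fin 2) ℚ_[p]) 1 1‖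
  then (g : Matrix (Fin 2) (Fin 2) ℚ_[p]) 1 1
  else (g : Matrix (Fin 2) (Fin 2) ℚ_[p]) 1 0

lemma norm_rowMax (g : GL (Fin 2) ℚ_[p]) :
    ‖rowMax p g‖ = max ‖(g : Matrix (Fin 2) (Fin 2) ℚ_[p]) 1 0‖
      ‖(g : Matrix (Fin 2) (Fin 2) ℚ_[p]) 1 1‖ := by
  unfold rowMax; split_ifs with h
  · exact (max_eq_right h).symm
  · exact (max_eq_left (not_le.mp h).le).symm

lemma rowMax_ne_zero (g : GL (Fin 2) ℚ_[p]) : rowMax p g ≠ 0 := by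
  intro h0
  have hmax : max ‖(g : Matrix (Fin 2) (Fin 2) ℚ_[p]) 1 0‖
      ‖(g : Matrix (Fin 2) (Fin 2) ℚ_[p]) 1 1‖ = 0 := by
    rw [← norm_rowMax, h0, norm_zero]
  have h1 : ‖(g : Matrix (Fin 2) (Fin 2) ℚ_[p]) 1 0‖ = 0 :=
    le_antisymm (hmax ▸ le_max_left _ _) (norm_nonneg _)
  have h2 : ‖(g : Matrix (Fin 2) (Fin 2) ℚ_[p]) 1 1‖ = 0 :=
    le_antisymm (hmax ▸ le_max_right _ _) (norm_nonneg _)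
  apply det_ne_zero p g
  rw [Matrix.det_fin_two, norm_eq_zero.mp h1, norm_eq_zero.mp h2]
  ring

/-- the unit `det g / rowMax g ^ 2`; `δ` of it is the splitting cocycle. -/
noncomputable def cUnit (g : GL (Fin 2) ℚ_[p]) : ℚ_[p]ˣ :=
  Units.mk0 (Matrix.det (g : Matrix (Fin 2) (Fin 2) ℚ_[p]) / rowMax p g ^ 2)
    (div_ne_zero (det_ne_zero p g) (pow_ne_zero 2 (rowMax_ne_zero p g)))

lemma norm_cUnit (g : GL (Fin 2) ℚ_[p]) :
    ‖(cUnit p g : ℚ_[p])‖ = ‖Matrix.det (g : Matrix (Fin 2) (Fin 2) ℚ_[p])‖ /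
      (max ‖(g : Matrix (Fin 2) (Fin 2) ℚ_[p]) 1 0‖
        ‖(g : Matrix (Fin 2) (Fin 2) ℚ_[p]) 1 1‖) ^ 2 := by
  simp [cUnit, norm_div, norm_pow, norm_rowMax]

section delta
variable {k : Type*} [Field k] (δ : ℚ_[p]ˣ → k)
  (hδ : ∀ x y : ℚ_[p]ˣ, δ (x * y) = δ x + δ y)
  (hunram : ∀ u : ℚ_[p]ˣ, ‖(u : ℚ_[p])‖ = 1 → δ u = 0)

include hδ hunram in
lemma delta_eq_of_norm_eq {x y : ℚ_[p]ˣ}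
    (h : ‖(x : ℚ_[p])‖ = ‖(y : ℚ_[p])‖) : δ x = δ y := by
  have hy : ‖(y : ℚ_[p])‖ ≠ 0 := norm_ne_zero_iff.mpr y.ne_zero
  have h1 : δ (x * y⁻¹) = 0 := by
    apply hunram
    rw [Units.val_mul, norm_mul, Units.val_inv_eq_inv_val, norm_inv, h,
      mul_inv_cancel₀ hy]
  have h2 : δ x = δ (x * y⁻¹) + δ y := by
    rw [← hδ, inv_mul_cancel_right]
  rw [h2, h1, zero_add]
end delta

lemma InK_inv {u : GL (Fin 2) ℚ_[p]} (hu : InK p u) : InK p u⁻¹ := by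
  obtain ⟨he, hd⟩ := hu
  have hdet : Matrix.det ((u⁻¹ : GL (Fin 2) ℚ_[p]) : Matrix (Fin 2) (Fin 2) ℚ_[p]) =
      (Matrix.det (u : Matrix (Fin 2) (Fin 2) ℚ_[p]))⁻¹ := by
    rw [Matrix.coe_units_inv, Matrix.det_nonsing_inv, Ring.inverse_eq_inv']
  have hinv : ((u⁻¹ : GL (Fin 2) ℚ_[p]) : Matrix (Fin 2) (Fin 2) ℚ_[p]) =
      (Matrix.det (u : Matrix (Fin 2) (Fin 2) ℚ_[p]))⁻¹ •
        (u : Matrix (Fin 2) (Fin 2) ℚ_[p]).adjugate := by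
    rw [Matrix.coe_units_inv, Matrix.inv_def, Ring.inverse_eq_inv']
  constructor
  · intro i j
    rw [hinv, Matrix.smul_apply, smul_eq_mul, norm_mul, norm_inv, hd, inv_one,
      one_mul, Matrix.adjugate_fin_two]
    fin_cases i <;> fin_cases j <;> simp <;>
      first
        | exact he 1 1 | exact he 0 1 | exact he 1 0 | exact he 0 0
  · rw [hdet, norm_inv, hd, inv_one]

lemma InKn_InK {n : ℕ} (hn : 1 ≤ n) {u : GL (Fin 2) ℚ_[p]}
    (hu : InKn p n u) : InK p u := by
  have hp1 : (1 : ℝ) < p := by exact_mod_cast (Fact.out : p.Prime).one_lt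
  have hlt : (p : ℝ) ^ (-(n : ℤ)) < 1 := by
    rw [_root_.zpow_neg]
    rw [inv_lt_one₀ (by positivity)]
    exact one_lt_zpow₀ hp1 (by exact_mod_cast hn)
  have hent : ∀ i j, ‖(u : Matrix (Fin 2) (Fin 2) ℚ_[p]) i j‖ ≤ 1 := by
    intro i j
    have h1 : ‖(1 : Matrix (Fin 2) (Fin 2) ℚ_[p]) i j‖ ≤ 1 := by
      rw [Matrix.one_apply]; split_ifs <;> simp
    calc ‖(u : Matrix (Fin 2) (Fin 2) ℚ_[p]) i j‖
        = ‖((u : Matrix (Fin 2) (Fin 2) ℚ_[p]) i j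
            - (1 : Matrix (Fin 2) (Fin 2) ℚ_[p]) i j)
            + (1 : Matrix (Fin 2) (Fin 2) ℚ_[p]) i j‖ := by rw [sub_add_cancel]
      _ ≤ _ := Padic.nonarchimedean _ _
      _ ≤ 1 := max_le (le_trans (hu i j) hlt.le) h1
  refine ⟨hent, ?_⟩
  have h00 : ‖(u : Matrix (Fin 2) (Fin 2) ℚ_[p]) 0 0 - 1‖ ≤ (p : ℝ) ^ (-(n : ℤ)) := by
    simpa using hu 0 0
  have h11 : ‖(u : Matrix (Fin 2) (Fin 2) ℚ_[p]) 1 1 - 1‖ ≤ (p : ℝ) ^ (-(n : ℤ)) := by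
    simpa using hu 1 1
  have h01 : ‖(u : Matrix (Fin 2) (Fin 2) ℚ_[p]) 0 1‖ ≤ (p : ℝ) ^ (-(n : ℤ)) := by
    simpa [Matrix.one_apply] using hu 0 1
  have h10 : ‖(u : Matrix (Fin 2) (Fin 2) ℚ_[p]) 1 0‖ ≤ (p : ℝ) ^ (-(n : ℤ)) := by
    simpa [Matrix.one_apply] using hu 1 0
  have hdet1 : ‖Matrix.det (u : Matrix (Fin 2) (Fin 2) ℚ_[p]) - 1‖ < 1 := by
    have expand : Matrix.det (u : Matrix (Fin 2) (Fin 2) ℚ_[p]) - 1 =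
        (((u : Matrix (Fin 2) (Fin 2) ℚ_[p]) 0 0 - 1) *
          (u : Matrix (Fin 2) (Fin 2) ℚ_[p]) 1 1 +
          ((u : Matrix (Fin 2) (Fin 2) ℚ_[p]) 1 1 - 1)) +
          (- ((u : Matrix (Fin 2) (Fin 2) ℚ_[p]) 0 1 *
            (u : Matrix (Fin 2) (Fin 2) ℚ_[p]) 1 0)) := by
      rw [Matrix.det_fin_two]; ring
    rw [expand]
    refine lt_of_le_of_lt (le_trans (Padic.nonarchimedean _ _) ?_) hlt
    apply max_le
    · refine le_trans (Padic.nonarchimedean _ _) (max_le ?_ h11)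
      rw [norm_mul]
      exact le_trans (mul_le_of_le_one_right (norm_nonneg _) (hent 1 1)) h00
    · rw [norm_neg, norm_mul]
      exact le_trans (mul_le_of_le_one_right (norm_nonneg _) (hent 1 0)) h01
  have hrw : Matrix.det (u : Matrix (Fin 2) (Fin 2) ℚ_[p]) =
      1 + (Matrix.det (u : Matrix (Fin 2) (Fin 2) ℚ_[p]) - 1) := by ring
  rw [hrw, Padic.add_eq_max_of_ne (by rw [norm_one]; exact (ne_of_lt hdet1).symm),
    norm_one, max_eq_left hdet1.le]

lemma row_mul_le {u : GL (Fin 2) ℚ_[p]}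
    (hu : ∀ i j, ‖(u : Matrix (Fin 2) (Fin 2) ℚ_[p]) i j‖ ≤ 1)
    (g : GL (Fin 2) ℚ_[p]) (j : Fin 2) :
    ‖((g * u : GL (Fin 2) ℚ_[p]) : Matrix (Fin 2) (Fin 2) ℚ_[p]) 1 j‖ ≤
      max ‖(g : Matrix (Fin 2) (Fin 2) ℚ_[p]) 1 0‖
        ‖(g : Matrix (Fin 2) (Fin 2) ℚ_[p]) 1 1‖ := by
  have e : ((g * u : GL (Fin 2) ℚ_[p]) : Matrix (Fin 2) (Fin 2) ℚ_[p]) 1 j =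
      (g : Matrix (Fin 2) (Fin 2) ℚ_[p]) 1 0 * (u : Matrix (Fin 2) (Fin 2) ℚ_[p]) 0 j +
      (g : Matrix (Fin 2) (Fin 2) ℚ_[p]) 1 1 * (u : Matrix (Fin 2) (Fin 2) ℚ_[p]) 1 j := by
    rw [Units.val_mul, Matrix.mul_apply, Fin.sum_univ_two]
  rw [e]
  refine le_trans (Padic.nonarchimedean _ _) (max_le_max ?_ ?_) <;>
  · rw [norm_mul]
    exact mul_le_of_le_one_right (norm_nonneg _) (hu _ _)

lemma maxRow_mul (g u : GL (Fin 2) ℚ_[p]) (hu : InK p u) :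
    max ‖((g * u : GL (Fin 2) ℚ_[p]) : Matrix (Fin 2) (Fin 2) ℚ_[p]) 1 0‖
      ‖((g * u : GL (Fin 2) ℚ_[p]) : Matrix (Fin 2) (Fin 2) ℚ_[p]) 1 1‖ =
    max ‖(g : Matrix (Fin 2) (Fin 2) ℚ_[p]) 1 0‖
      ‖(g : Matrix (Fin 2) (Fin 2) ℚ_[p]) 1 1‖ := by
  apply le_antisymm
  · exact max_le (row_mul_le p hu.1 g 0) (row_mul_le p hu.1 g 1)
  · have h2 := InK_inv p hu
    have h3 := max_le (row_mul_le p h2.1 (g * u) 0) (row_mul_le p h2.1 (g * u) 1)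
    simpa [mul_inv_cancel_right] using h3

lemma norm_cUnit_mul (g u : GL (Fin 2) ℚ_[p]) (hu : InK p u) :
    ‖(cUnit p (g * u) : ℚ_[p])‖ = ‖(cUnit p g : ℚ_[p])‖ := by
  rw [norm_cUnit, norm_cUnit, maxRow_mul p g u hu]
  congr 1
  rw [Units.val_mul, Matrix.det_mul, norm_mul, hu.2, mul_one]

lemma max_mul_mul (c x y : ℝ) (hc : 0 ≤ c) : max (c * x) (c * y) = c * max x y := by
  rcases le_total x y with h | h
  · rw [max_eq_right h, max_eq_right (mul_le_mul_of_nonneg_left h hc)]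
  · rw [max_eq_left h, max_eq_left (mul_le_mul_of_nonneg_left h hc)]

lemma norm_cocycle (b g : GL (Fin 2) ℚ_[p])
    (hb : (b : Matrix (Fin 2) (Fin 2) ℚ_[p]) 1 0 = 0) (a d : ℚ_[p]ˣ)
    (ha : (b : Matrix (Fin 2) (Fin 2) ℚ_[p]) 0 0 = (a : ℚ_[p]))
    (hd : (b : Matrix (Fin 2) (Fin 2) ℚ_[p]) 1 1 = (d : ℚ_[p])) :
    ‖((cUnit p (b * g) * (cUnit p g * (a * d⁻¹))⁻¹ : ℚ_[p]ˣ) : ℚ_[p])‖ = 1 := by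
  have e10 : ((b * g : GL (Fin 2) ℚ_[p]) : Matrix (Fin 2) (Fin 2) ℚ_[p]) 1 0 =
      (d : ℚ_[p]) * (g : Matrix (Fin 2) (Fin 2) ℚ_[p]) 1 0 := by
    rw [Units.val_mul, Matrix.mul_apply, Fin.sum_univ_two, hb, hd]; ring
  have e11 : ((b * g : GL (Fin 2) ℚ_[p]) : Matrix (Fin 2) (Fin 2) ℚ_[p]) 1 1 =
      (d : ℚ_[p]) * (g : Matrix (Fin 2) (Fin 2) ℚ_[p]) 1 1 := by
    rw [Units.val_mul, Matrix.mul_apply, Fin.sum_univ_two, hb, hd]; ring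
  have edet : Matrix.det ((b * g : GL (Fin 2) ℚ_[p]) : Matrix (Fin 2) (Fin 2) ℚ_[p]) =
      ((a : ℚ_[p]) * (d : ℚ_[p])) * Matrix.det (g : Matrix (Fin 2) (Fin 2) ℚ_[p]) := by
    rw [Units.val_mul, Matrix.det_mul, Matrix.det_fin_two
      (b : Matrix (Fin 2) (Fin 2) ℚ_[p]), hb, ha, hd]
    ring
  have hlhs : ‖(cUnit p (b * g) : ℚ_[p])‖ =
      (‖(a : ℚ_[p])‖ * ‖(d : ℚ_[p])‖ * ‖Matrix.det (g : Matrix (Fin 2) (Fin 2) ℚ_[p])‖) /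
      (‖(d : ℚ_[p])‖ * max ‖(g : Matrix (Fin 2) (Fin 2) ℚ_[p]) 1 0‖
        ‖(g : Matrix (Fin 2) (Fin 2) ℚ_[p]) 1 1‖) ^ 2 := by
    rw [norm_cUnit, e10, e11, edet, norm_mul, norm_mul, norm_mul, norm_mul,
      max_mul_mul _ _ _ (norm_nonneg _)]
  have hrhs : ‖((cUnit p g * (a * d⁻¹) : ℚ_[p]ˣ) : ℚ_[p])‖ =
      (‖Matrix.det (g : Matrix (Fin 2) (Fin 2) ℚ_[p])‖ /
        (max ‖(g : Matrix (Fin 2) (Fin 2) ℚ_[p]) 1 0‖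
          ‖(g : Matrix (Fin 2) (Fin 2) ℚ_[p]) 1 1‖) ^ 2) *
      (‖(a : ℚ_[p])‖ * ‖(d : ℚ_[p])‖⁻¹) := by
    rw [Units.val_mul, Units.val_mul, norm_mul, norm_mul,
      Units.val_inv_eq_inv_val, norm_inv, norm_cUnit]
  have hd0 : ‖(d : ℚ_[p])‖ ≠ 0 := norm_ne_zero_iff.mpr d.ne_zero
  have ha0 : ‖(a : ℚ_[p])‖ ≠ 0 := norm_ne_zero_iff.mpr a.ne_zero
  have hdet0 : ‖Matrix.det (g : Matrix (Fin 2) (Fin 2) ℚ_[p])‖ ≠ 0 :=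
    norm_ne_zero_iff.mpr (det_ne_zero p g)
  have hM0 : max ‖(g : Matrix (Fin 2) (Fin 2) ℚ_[p]) 1 0‖
      ‖(g : Matrix (Fin 2) (Fin 2) ℚ_[p]) 1 1‖ ≠ 0 := by
    rw [← norm_rowMax]; exact norm_ne_zero_iff.mpr (rowMax_ne_zero p g)
  rw [Units.val_mul, norm_mul, Units.val_inv_eq_inv_val, norm_inv, hlhs, hrhs]
  field_simp

end Statement2Aux

/-- the easy direction of Proposition 2.2 of the paper.
If `δ` is unramified, then the projection `pr : Ind_P^G ε_δ → Ind_P^G χ`,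
`f ↦ (g ↦ f(g)₂)`, admits a `K`-equivariant `k`-linear section `s`, where
groups act by right translation. -/
theorem statement_2 (p : ℕ) [Fact p.Prime] (k : Type*) [Field k] [CharP k p]
    (χ₁ χ₂ : ℚ_[p]ˣ →* kˣ)
    (hχ₁ : ∃ N : ℕ, 1 ≤ N ∧
      ∀ u : ℚ_[p]ˣ, ‖(u : ℚ_[p]) - 1‖ ≤ (p : ℝ) ^ (-(N : ℤ)) → χ₁ u = 1)
    (hχ₂ : ∃ N : ℕ, 1 ≤ N ∧
      ∀ u : ℚ_[p]ˣ, ‖(u : ℚ_[p]) - 1‖ ≤ (p : ℝ) ^ (-(N : ℤ)) → χ₂ u = 1)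
    (δ : ℚ_[p]ˣ → k) (hδ : ∀ x y : ℚ_[p]ˣ, δ (x * y) = δ x + δ y)
    -- `δ` is unramified, i.e. trivial on `ℤ_pˣ`:
    (hunram : ∀ u : ℚ_[p]ˣ, ‖(u : ℚ_[p])‖ = 1 → δ u = 0) :
    ∃ s : (GL (Fin 2) ℚ_[p] → k) → (GL (Fin 2) ℚ_[p] → k × k),
      -- `s` maps `Ind_P^G χ` into `Ind_P^G ε_δ`:
      (∀ h, IsIndChi p χ₁ χ₂ h → IsIndEps p χ₁ χ₂ δ (s h)) ∧
      -- `pr ∘ s = id`: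
      (∀ h, IsIndChi p χ₁ χ₂ h → ∀ g, (s h g).2 = h g) ∧
      -- `s` is `k`-linear:
      (∀ h₁ h₂, IsIndChi p χ₁ χ₂ h₁ → IsIndChi p χ₁ χ₂ h₂ →
        s (h₁ + h₂) = s h₁ + s h₂) ∧
      (∀ (c : k) h, IsIndChi p χ₁ χ₂ h → s (c • h) = c • s h) ∧
      -- `s` is `K`-equivariant for the right translation action:
      (∀ u, InK p u → ∀ h, IsIndChi p χ₁ χ₂ h →
        s (fun g => h (g * u)) = fun g => s h (g * u)) := by
  classical
  open Statement2Aux in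
  refine ⟨fun h g => (δ (cUnit p g) * h g, h g), ?_, ?_, ?_, ?_, ?_⟩
  · rintro h ⟨h1, n, hn1, hn⟩
    constructor
    · intro b g hb a d ha hd
      have hc : δ (cUnit p (b * g)) = δ (cUnit p g) + δ (a * d⁻¹) := by
        have heq : δ (cUnit p (b * g)) = δ (cUnit p g * (a * d⁻¹)) := by
          have h0 := hunram _ (Statement2Aux.norm_cocycle p b g hb a d ha hd)
          have h2 : δ (cUnit p (b * g)) =
              δ (cUnit p (b * g) * (cUnit p g * (a * d⁻¹))⁻¹) +
                δ (cUnit p g * (a * d⁻¹)) := by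
            rw [← hδ, inv_mul_cancel_right]
          rw [h2, h0, zero_add]
        rw [heq, hδ]
      have hh := h1 b g hb a d ha hd
      simp only [hh, hc, Prod.mk.injEq]
      exact ⟨by ring, trivial⟩
    · refine ⟨n, hn1, fun g u hu => ?_⟩
      have hK : InK p u := Statement2Aux.InKn_InK p hn1 hu
      have hc : δ (cUnit p (g * u)) = δ (cUnit p g) :=
        Statement2Aux.delta_eq_of_norm_eq p δ hδ hunram
          (Statement2Aux.norm_cUnit_mul p g u hK)
      simp only [hc, hn g u hu]
  · intro h _ g; rfl
  · intro h₁ h₂ _ _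
    funext g
    simp only [Pi.add_apply, Prod.mk_add_mk, Prod.mk.injEq]
    exact ⟨by ring, trivial⟩
  · intro c h _
    funext g
    simp only [Pi.smul_apply, Prod.smul_mk, smul_eq_mul, Prod.mk.injEq]
    exact ⟨by ring, trivial⟩
  · intro u hu h _
    funext g
    have hc : δ (cUnit p (g * u)) = δ (cUnit p g) :=
      Statement2Aux.delta_eq_of_norm_eq p δ hδ hunram
        (Statement2Aux.norm_cUnit_mul p g u hu)
    simp only [hc]
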